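/- Fix δ ∈ (0,1). Then the Beta(1−α, θ+α) measure of the interval (1−δ, 1] converges to 1 as a(α,θ) → 0 over pairs (α,θ) with α ∈ (0,1) and θ + α > 0. In particular, the distribution Beta(1−α, θ+α) converges weakly to the point mass at 1. -/

import Mathlib

open MeasureTheory Filter Set

/-- The Beta distribution on `ℝ` with parameters `a, b`: the measure with density
`x^(a-1) * (1-x)^(b-1) / (Γ(a)Γ(b)/Γ(a+b))` on `(0,1)` with respect to Lebesgue measure. -/
noncomputable def betaMeasure (a b : ℝ) : Measure ℝ :=
  volume.withDensity fun x =>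
    ENNReal.ofReal (Set.indicator (Set.Ioo (0:ℝ) 1)
      (fun x => x ^ (a - 1) * (1 - x) ^ (b - 1) /
        (Real.Gamma a * Real.Gamma b / Real.Gamma (a + b))) x)

/-- `a(α,θ) = max(α, |θ|)`. -/
noncomputable def aParam (α θ : ℝ) : ℝ := max α |θ|

/-- The filter describing `a(α,θ) → 0` over pairs `(α,θ)` with `α ∈ (0,1)` and `θ + α > 0`. -/
noncomputable def smallParamFilter : Filter (ℝ × ℝ) :=
  (Filter.comap (fun p : ℝ × ℝ => aParam p.1 p.2) (nhdsWithin 0 (Set.Ioi 0))) ⊓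
    Filter.principal {p : ℝ × ℝ | p.1 ∈ Set.Ioo (0:ℝ) 1 ∧ 0 < p.1 + p.2}


open scoped ENNReal


lemma real_beta_integral {a b : ℝ} (ha : 0 < a) (hb : 0 < b) :
    ∫ x in (0:ℝ)..1, x ^ (a-1) * (1-x) ^ (b-1)
      = Real.Gamma a * Real.Gamma b / Real.Gamma (a + b) := by
  have h := Complex.Gamma_mul_Gamma_eq_betaIntegral (s := a) (t := b) (by simpa) (by simpa)
  have hI : Complex.betaIntegral a b
      = ((∫ x in (0:ℝ)..1, x ^ (a-1) * (1-x) ^ (b-1) : ℝ) : ℂ) := by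
    rw [Complex.betaIntegral, ← intervalIntegral.integral_ofReal]
    refine intervalIntegral.integral_congr fun x hx => ?_
    rw [uIcc_of_le zero_le_one] at hx
    have e1 : ((x:ℂ)) ^ ((a:ℂ)-1) = ((x ^ (a-1) : ℝ) : ℂ) := by
      rw [Complex.ofReal_cpow hx.1]; push_cast; rfl
    have e2 : ((1:ℂ)-(x:ℂ)) ^ ((b:ℂ)-1) = (((1-x) ^ (b-1) : ℝ) : ℂ) := by
      rw [Complex.ofReal_cpow (by linarith [hx.2] : (0:ℝ) ≤ 1 - x)]; push_cast; rfl
    rw [e1, e2, ← Complex.ofReal_mul]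
  rw [hI, Complex.Gamma_ofReal, Complex.Gamma_ofReal,
    show ((a:ℂ)+(b:ℂ)) = ((a+b:ℝ):ℂ) by push_cast; rfl, Complex.Gamma_ofReal] at h
  have hab : Real.Gamma (a + b) ≠ 0 := (Real.Gamma_pos_of_pos (by linarith)).ne'
  have h2 : Real.Gamma a * Real.Gamma b
      = Real.Gamma (a + b) * ∫ x in (0:ℝ)..1, x ^ (a-1) * (1-x) ^ (b-1) := by
    exact_mod_cast h
  field_simp [h2]
  linarith

lemma integrableOn_beta {a b : ℝ} (ha : 0 < a) (hb : 0 < b) :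
    IntegrableOn (fun x : ℝ => x ^ (a-1) * (1-x) ^ (b-1)) (Ioo 0 1) := by
  have h := Complex.betaIntegral_convergent (u := a) (v := b) (by simpa) (by simpa)
  have h1 : IntegrableOn (fun x : ℝ => (x:ℂ) ^ ((a:ℂ)-1) * ((1:ℂ)-x) ^ ((b:ℂ)-1)) (Ioo 0 1) :=
    h.1.mono_set Ioo_subset_Ioc_self
  have h2 : IntegrableOn
      (fun x : ℝ => ((x:ℂ) ^ ((a:ℂ)-1) * ((1:ℂ)-x) ^ ((b:ℂ)-1)).re) (Ioo 0 1) := h1.re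
  refine IntegrableOn.congr_fun h2 ?_ measurableSet_Ioo
  intro x hx
  have e1 : ((x:ℂ)) ^ ((a:ℂ)-1) = ((x ^ (a-1) : ℝ) : ℂ) := by
    rw [Complex.ofReal_cpow hx.1.le]; push_cast; rfl
  have e2 : ((1:ℂ)-(x:ℂ)) ^ ((b:ℂ)-1) = (((1-x) ^ (b-1) : ℝ) : ℂ) := by
    rw [Complex.ofReal_cpow (by linarith [hx.2] : (0:ℝ) ≤ 1 - x)]; push_cast; rfl
  simp only [e1, e2, ← Complex.ofReal_mul, Complex.ofReal_re]

lemma Bpos {a b : ℝ} (ha : 0 < a) (hb : 0 < b) :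
    0 < Real.Gamma a * Real.Gamma b / Real.Gamma (a + b) :=
  div_pos (mul_pos (Real.Gamma_pos_of_pos ha) (Real.Gamma_pos_of_pos hb))
    (Real.Gamma_pos_of_pos (by linarith))

lemma betaMeasure_Ioo {a b : ℝ} (ha : 0 < a) (hb : 0 < b) :
    betaMeasure a b (Ioo 0 1) = 1 := by
  set C := Real.Gamma a * Real.Gamma b / Real.Gamma (a + b) with hC
  have hCpos : 0 < C := Bpos ha hb
  rw [betaMeasure, withDensity_apply _ measurableSet_Ioo]
  rw [setLIntegral_congr_fun measurableSet_Ioo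
    (fun x (hx : x ∈ Ioo (0:ℝ) 1) => by rw [Set.indicator_of_mem hx])]
  rw [← ofReal_integral_eq_lintegral_ofReal ((integrableOn_beta ha hb).div_const C)
    (ae_restrict_of_forall_mem measurableSet_Ioo (fun x hx =>
      div_nonneg (mul_nonneg (Real.rpow_nonneg hx.1.le _)
        (Real.rpow_nonneg (by linarith [hx.2]) _)) hCpos.le))]
  rw [integral_div, ← integral_Ioc_eq_integral_Ioo,
    ← intervalIntegral.integral_of_le zero_le_one, real_beta_integral ha hb, ← hC,
    div_self hCpos.ne']
  exact ENNReal.ofReal_one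

lemma Gamma_tendsto_atTop : Tendsto Real.Gamma (nhdsWithin 0 (Ioi (0:ℝ))) atTop := by
  have hc : Tendsto (fun x : ℝ => Real.Gamma (x + 1)) (nhdsWithin 0 (Ioi (0:ℝ))) (nhds 1) := by
    have h1 : ContinuousAt Real.Gamma 1 :=
      (Real.differentiableAt_Gamma (fun m => by have : (0:ℝ) ≤ m := Nat.cast_nonneg m; intro h; linarith)).continuousAt
    have h2 : Tendsto (fun x : ℝ => x + 1) (nhdsWithin 0 (Ioi (0:ℝ))) (nhds 1) := by
      have h0 : Tendsto (fun x : ℝ => x + 1) (nhds 0) (nhds 1) := by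
        have := Continuous.tendsto (continuous_id.add (continuous_const (y := (1:ℝ)))) 0
        simpa [Function.comp_def, Pi.add_def] using this
      exact h0.mono_left nhdsWithin_le_nhds
    simpa [Real.Gamma_one, Function.comp_def] using h1.tendsto.comp h2
  have h3 : Tendsto (fun x : ℝ => Real.Gamma (x + 1) * x⁻¹) (nhdsWithin 0 (Ioi (0:ℝ))) atTop :=
    hc.pos_mul_atTop one_pos tendsto_inv_nhdsGT_zero
  refine h3.congr' ?_
  filter_upwards [self_mem_nhdsWithin] with x (hx : x ∈ Ioi (0:ℝ))
  rw [Real.Gamma_add_one (ne_of_gt hx), mul_comm, ← mul_assoc, inv_mul_cancel₀ (ne_of_gt hx), one_mul]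

/-- For fixed `δ ∈ (0,1)`, the `Beta(1-α, θ+α)` measure of `(1-δ, 1]` converges to `1` as
`a(α,θ) → 0` over pairs `(α,θ)` with `α ∈ (0,1)` and `θ + α > 0`; in particular,
`Beta(1-α, θ+α)` converges weakly to the point mass at `1`. -/
theorem beta_measure_Ioc_tendsto_one (δ : ℝ) (hδ : δ ∈ Set.Ioo (0:ℝ) 1) :
    Filter.Tendsto
      (fun p : ℝ × ℝ => betaMeasure (1 - p.1) (p.2 + p.1) (Set.Ioc (1 - δ) 1))
      smallParamFilter (nhds 1) := by
  obtain ⟨hδ0, hδ1⟩ := hδ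
  set L := smallParamFilter with hL
  set B : ℝ × ℝ → ℝ := fun p =>
    Real.Gamma (1 - p.1) * Real.Gamma (p.2 + p.1) / Real.Gamma ((1 - p.1) + (p.2 + p.1)) with hBdef
  set F : ℝ × ℝ → ℝ≥0∞ := fun p => betaMeasure (1 - p.1) (p.2 + p.1) (Ioc 0 (1 - δ)) with hFdef
  -- basic filter facts
  have haP : Tendsto (fun p : ℝ × ℝ => aParam p.1 p.2) L (nhdsWithin 0 (Ioi (0:ℝ))) :=
    tendsto_comap.mono_left inf_le_left
  have haP0 : Tendsto (fun p : ℝ × ℝ => aParam p.1 p.2) L (nhds 0) :=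
    haP.mono_right nhdsWithin_le_nhds
  have hprin : ∀ᶠ p : ℝ × ℝ in L, p.1 ∈ Set.Ioo (0:ℝ) 1 ∧ 0 < p.1 + p.2 :=
    mem_inf_of_right (mem_principal_self _)
  have hsmall : ∀ᶠ p : ℝ × ℝ in L, aParam p.1 p.2 < 1/2 :=
    haP0.eventually (gt_mem_nhds (by norm_num))
  -- α → 0 and θ → 0
  have hα0 : Tendsto (fun p : ℝ × ℝ => p.1) L (nhds 0) := by
    refine squeeze_zero' (hprin.mono fun p hp => hp.1.1.le)
      (Eventually.of_forall fun p => le_max_left _ _) haP0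
  have hθ0 : Tendsto (fun p : ℝ × ℝ => p.2) L (nhds 0) :=
    squeeze_zero_norm' (Eventually.of_forall fun p => le_max_right p.1 |p.2|) haP0
  -- B → atTop
  have hb0 : Tendsto (fun p : ℝ × ℝ => p.2 + p.1) L (nhdsWithin 0 (Ioi (0:ℝ))) := by
    refine tendsto_nhdsWithin_iff.2 ⟨by simpa using hθ0.add hα0, hprin.mono fun p hp => ?_⟩
    simpa [add_comm] using hp.2
  have hΓb : Tendsto (fun p : ℝ × ℝ => Real.Gamma (p.2 + p.1)) L atTop :=
    Gamma_tendsto_atTop.comp hb0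
  have hΓcont : ContinuousAt Real.Gamma 1 :=
    (Real.differentiableAt_Gamma (fun m => by
      have : (0:ℝ) ≤ m := Nat.cast_nonneg m; intro h; linarith)).continuousAt
  have hΓ1 : Tendsto (fun p : ℝ × ℝ => Real.Gamma (1 - p.1)) L (nhds 1) := by
    have h1 : Tendsto (fun p : ℝ × ℝ => 1 - p.1) L (nhds 1) := by
      simpa using (tendsto_const_nhds (x := (1:ℝ)) (f := L)).sub hα0
    simpa [Real.Gamma_one, Function.comp_def] using hΓcont.tendsto.comp h1
  have hΓ2 : Tendsto (fun p : ℝ × ℝ => Real.Gamma ((1 - p.1) + (p.2 + p.1))) L (nhds 1) := by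
    have h1 : Tendsto (fun p : ℝ × ℝ => (1 - p.1) + (p.2 + p.1)) L (nhds 1) := by
      have := ((tendsto_const_nhds (x := (1:ℝ)) (f := L)).sub hα0).add (hθ0.add hα0)
      simpa using this
    simpa [Real.Gamma_one, Function.comp_def] using hΓcont.tendsto.comp h1
  have hBtop : Tendsto B L atTop := by
    have hmul : Tendsto (fun p : ℝ × ℝ => Real.Gamma (1 - p.1) * Real.Gamma (p.2 + p.1)) L atTop :=
      hΓ1.pos_mul_atTop one_pos hΓb
    have hinv : Tendsto (fun p : ℝ × ℝ => (Real.Gamma ((1 - p.1) + (p.2 + p.1)))⁻¹) L (nhds 1) := by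
      simpa using hΓ2.inv₀ one_ne_zero
    have := hmul.atTop_mul_pos one_pos hinv
    refine this.congr fun p => ?_
    simp [hBdef, div_eq_mul_inv]
  -- the bound 2 / (δ * B p) → 0
  have hbound0 : Tendsto (fun p : ℝ × ℝ => 2 / (δ * B p)) L (nhds 0) :=
    tendsto_const_nhds.div_atTop (hBtop.const_mul_atTop hδ0)
  -- F ≤ ofReal (2 / (δ * B p)) eventually
  have hFle : ∀ᶠ p : ℝ × ℝ in L, F p ≤ ENNReal.ofReal (2 / (δ * B p)) := by
    filter_upwards [hprin, hsmall] with p hp hps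
    obtain ⟨⟨hα0', hα1⟩, hb⟩ := hp
    have hαhalf : p.1 ≤ 1/2 := le_trans (le_max_left _ _) hps.le
    have hbhalf : p.2 + p.1 < 1 := by
      have h1 : p.1 ≤ aParam p.1 p.2 := le_max_left _ _
      have h2 : p.2 ≤ aParam p.1 p.2 := le_trans (le_abs_self _) (le_max_right _ _)
      linarith
    have hb' : 0 < p.2 + p.1 := by linarith [hb]
    have hBp : 0 < B p := Bpos (by linarith) hb'
    have hδ1' : 1 - δ < 1 := by linarith
    -- pointwise bound on the density
    have key : F p ≤ ∫⁻ x in Ioc (0:ℝ) (1-δ),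
        ENNReal.ofReal (x ^ (-(1/2) : ℝ) * δ⁻¹ / B p) := by
      rw [hFdef]
      show betaMeasure (1 - p.1) (p.2 + p.1) (Ioc 0 (1 - δ)) ≤ _
      rw [betaMeasure, withDensity_apply _ measurableSet_Ioc]
      refine setLIntegral_mono (by fun_prop) fun x hx => ?_
      have hx0 : 0 < x := hx.1
      have hxd : x ≤ 1 - δ := hx.2
      have hx1 : x < 1 := by linarith
      have hmem : x ∈ Ioo (0:ℝ) 1 := ⟨hx0, hx1⟩
      rw [Set.indicator_of_mem hmem]
      refine ENNReal.ofReal_le_ofReal ?_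
      have hBeq : Real.Gamma (1 - p.1) * Real.Gamma (p.2 + p.1) /
          Real.Gamma ((1 - p.1) + (p.2 + p.1)) = B p := rfl
      rw [hBeq]
      have e1 : x ^ ((1 - p.1) - 1) ≤ x ^ (-(1/2) : ℝ) := by
        apply Real.rpow_le_rpow_of_exponent_ge hx0 hx1.le
        linarith
      have e2 : (1 - x) ^ ((p.2 + p.1) - 1) ≤ δ⁻¹ := by
        have d1 : (1 - x) ^ ((p.2 + p.1) - 1) ≤ δ ^ ((p.2 + p.1) - 1) :=
          Real.rpow_le_rpow_of_nonpos hδ0 (by linarith) (by linarith)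
        have d2 : δ ^ ((p.2 + p.1) - 1) ≤ δ ^ (-1 : ℝ) :=
          Real.rpow_le_rpow_of_exponent_ge hδ0 hδ1.le (by linarith)
        calc (1 - x) ^ ((p.2 + p.1) - 1) ≤ δ ^ (-1 : ℝ) := d1.trans d2
          _ = δ⁻¹ := by rw [Real.rpow_neg_one]
      have hnum : x ^ ((1 - p.1) - 1) * (1 - x) ^ ((p.2 + p.1) - 1)
          ≤ x ^ (-(1/2) : ℝ) * δ⁻¹ := by
        apply mul_le_mul e1 e2 (Real.rpow_nonneg (by linarith) _) (Real.rpow_nonneg hx0.le _)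
      gcongr
    -- integrate the bound
    have hint : IntegrableOn (fun x : ℝ => x ^ (-(1/2) : ℝ) * δ⁻¹ / B p) (Ioc 0 1) := by
      have := (intervalIntegral.intervalIntegrable_rpow' (a := 0) (b := 1)
        (r := -(1/2)) (by norm_num)).1
      exact (this.mul_const δ⁻¹).div_const (B p)
    have hval : ∫ x in Ioc (0:ℝ) 1, x ^ (-(1/2) : ℝ) * δ⁻¹ / B p = 2 / (δ * B p) := by
      rw [← intervalIntegral.integral_of_le zero_le_one]
      rw [intervalIntegral.integral_div, intervalIntegral.integral_mul_const,
        integral_rpow (Or.inl (by norm_num))]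
      rw [show (-(1/2) : ℝ) + 1 = 1/2 by norm_num]
      rw [Real.one_rpow, Real.zero_rpow (by norm_num)]
      field_simp
      norm_num
    calc F p ≤ ∫⁻ x in Ioc (0:ℝ) (1-δ), ENNReal.ofReal (x ^ (-(1/2) : ℝ) * δ⁻¹ / B p) := key
      _ ≤ ∫⁻ x in Ioc (0:ℝ) 1, ENNReal.ofReal (x ^ (-(1/2) : ℝ) * δ⁻¹ / B p) :=
          lintegral_mono_set (Ioc_subset_Ioc_right (by linarith))
      _ = ENNReal.ofReal (∫ x in Ioc (0:ℝ) 1, x ^ (-(1/2) : ℝ) * δ⁻¹ / B p) := by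
          rw [← ofReal_integral_eq_lintegral_ofReal hint
            (ae_restrict_of_forall_mem measurableSet_Ioc fun x hx =>
              div_nonneg (mul_nonneg (Real.rpow_nonneg hx.1.le _) (by positivity)) hBp.le)]
      _ = ENNReal.ofReal (2 / (δ * B p)) := by rw [hval]
  -- F → 0
  have hF0 : Tendsto F L (nhds 0) := by
    refine tendsto_of_tendsto_of_tendsto_of_le_of_le' tendsto_const_nhds ?_
      (Eventually.of_forall fun p => zero_le) hFle
    have := ENNReal.tendsto_ofReal hbound0
    simpa using this
  -- the main identity
  have hkey : ∀ᶠ p : ℝ × ℝ in L,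
      betaMeasure (1 - p.1) (p.2 + p.1) (Set.Ioc (1 - δ) 1) = 1 - F p := by
    filter_upwards [hprin] with p hp
    obtain ⟨⟨hα0', hα1⟩, hb⟩ := hp
    have ha' : 0 < 1 - p.1 := by linarith
    have hb' : 0 < p.2 + p.1 := by linarith
    set μ := betaMeasure (1 - p.1) (p.2 + p.1) with hμ
    have hsplit : F p + μ (Ioo (1-δ) 1) = 1 := by
      rw [hFdef]
      rw [← measure_union (by
          rw [Set.disjoint_left]; exact fun x hx hx' => absurd hx.2 (not_le.2 hx'.1))
        measurableSet_Ioo]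
      rw [Ioc_union_Ioo_eq_Ioo (by linarith) (by linarith)]
      exact betaMeasure_Ioo ha' hb'
    have h1 : μ {1} = 0 := by
      rw [hμ, betaMeasure]
      exact (withDensity_absolutelyContinuous volume _) (measure_singleton 1)
    have hIoc : μ (Ioc (1-δ) 1) = μ (Ioo (1-δ) 1) := by
      rw [← Ioo_union_right (by linarith : 1-δ < 1),
        measure_union (by simp) (measurableSet_singleton 1), h1, add_zero]
    have hFtop : F p ≠ ⊤ := by
      refine ne_top_of_le_ne_top ENNReal.one_ne_top ?_
      rw [← hsplit]; exact le_self_add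
    rw [hIoc, ← hsplit, ENNReal.add_sub_cancel_left hFtop]
  have hgoal : Tendsto (fun p : ℝ × ℝ => (1 : ℝ≥0∞) - F p) L (nhds 1) := by
    have := ENNReal.Tendsto.sub (tendsto_const_nhds (x := (1:ℝ≥0∞)) (f := L)) hF0
      (Or.inl ENNReal.one_ne_top)
    simpa using this
  exact hgoal.congr' (hkey.mono fun p hp => hp.symm)
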